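/- Let ψ(θ,ρ) = -c_V θ(ln(θ/θ̂) - 1) + c_V θ(γ-1) ln(ρ/ρ̂) - c_V θ̂ with constants c_V > 0, γ > 1, θ̂ > 0, ρ̂ > 0, and set η = -∂ψ/∂θ, e = ψ + θη, p̂ = c_V(γ-1)θ̂ρ̂. Then for all θ, ρ > 0: ρ[(e(θ,ρ) - θ̂ η(θ,ρ)) - (e(θ̂,ρ̂) - θ̂ η(θ̂,ρ̂))] - (p̂/ρ̂)(ρ - ρ̂) = ρ c_V θ̂ [θ/θ̂ - 1 - ln(θ/θ̂)] + c_V(γ-1)θ̂ ρ̂ [(ρ/ρ̂) ln(ρ/ρ̂) - ρ/ρ̂ + 1]. -/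

import Mathlib

theorem stmt_12 (cV γ θhat ρhat : ℝ)
    (hcV : 0 < cV) (hγ : 1 < γ) (hθhat : 0 < θhat) (hρhat : 0 < ρhat)
    (ψ : ℝ → ℝ → ℝ)
    (hψ : ∀ θ ρ, ψ θ ρ =
      -(cV * θ * (Real.log (θ / θhat) - 1)) +
        cV * θ * (γ - 1) * Real.log (ρ / ρhat) - cV * θhat)
    -- entropy η = -∂ψ/∂θ
    (η : ℝ → ℝ → ℝ)
    (hη : ∀ θ ρ, 0 < θ → 0 < ρ → HasDerivAt (fun t => ψ t ρ) (-(η θ ρ)) θ)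
    -- internal energy e = ψ + θ η
    (e : ℝ → ℝ → ℝ) (he : ∀ θ ρ, e θ ρ = ψ θ ρ + θ * η θ ρ)
    (phat : ℝ) (hphat : phat = cV * (γ - 1) * θhat * ρhat) :
    ∀ θ ρ : ℝ, 0 < θ → 0 < ρ →
      ρ * ((e θ ρ - θhat * η θ ρ) - (e θhat ρhat - θhat * η θhat ρhat)) -
          phat / ρhat * (ρ - ρhat) =
        ρ * cV * θhat * (θ / θhat - 1 - Real.log (θ / θhat)) +
          cV * (γ - 1) * θhat * ρhat *
            ((ρ / ρhat) * Real.log (ρ / ρhat) - ρ / ρhat + 1) := by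
  -- First compute η explicitly.
  have hηval : ∀ θ ρ : ℝ, 0 < θ → 0 < ρ →
      η θ ρ = cV * Real.log (θ / θhat) - cV * (γ - 1) * Real.log (ρ / ρhat) := by
    intro θ ρ hθ hρ
    have hD : HasDerivAt (fun t => ψ t ρ)
        (-(cV * Real.log (θ / θhat) - cV * (γ - 1) * Real.log (ρ / ρhat))) θ := by
      have h1 : HasDerivAt (fun t : ℝ =>
          -(cV * t * (Real.log (t / θhat) - 1)) +
            cV * t * (γ - 1) * Real.log (ρ / ρhat) - cV * θhat)
          (-(cV * Real.log (θ / θhat) - cV * (γ - 1) * Real.log (ρ / ρhat))) θ := by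
        have hlog : HasDerivAt (fun t : ℝ => Real.log (t / θhat) - 1) (1 / θ) θ := by
          have hne : θ / θhat ≠ 0 := div_ne_zero hθ.ne' hθhat.ne'
          have := (Real.hasDerivAt_log hne).comp θ
            ((hasDerivAt_id θ).div_const θhat)
          have h0 : (θ / θhat)⁻¹ * (1 / θhat) = 1 / θ := by
            field_simp
          rw [h0] at this
          simpa [Function.comp] using this.sub_const 1
        have h2 : HasDerivAt (fun t : ℝ => cV * t * (Real.log (t / θhat) - 1))
            (cV * (Real.log (θ / θhat) - 1) + cV * θ * (1 / θ)) θ := by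
          have := ((hasDerivAt_id θ).const_mul cV).mul hlog
          simpa [Pi.mul_def, mul_comm, mul_assoc, mul_left_comm] using this
        have h3 : HasDerivAt (fun t : ℝ => cV * t * (γ - 1) * Real.log (ρ / ρhat))
            (cV * (γ - 1) * Real.log (ρ / ρhat)) θ := by
          have : HasDerivAt (fun t : ℝ => t * (cV * (γ - 1) * Real.log (ρ / ρhat)))
              (cV * (γ - 1) * Real.log (ρ / ρhat)) θ := by
            simpa using (hasDerivAt_id θ).mul_const (cV * (γ - 1) * Real.log (ρ / ρhat))
          convert this using 2 with t
          ring
        have := (h2.neg.add h3).sub_const (cV * θhat)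
        refine this.congr_deriv ?_
        rw [show cV * θ * (1 / θ) = cV by field_simp]
        ring
      exact h1.congr_of_eventuallyEq (by filter_upwards with t; rw [hψ])
    have := (hη θ ρ hθ hρ).unique hD
    linarith
  intro θ ρ hθ hρ
  have hηθ := hηval θ ρ hθ hρ
  have hηh := hηval θhat ρhat hθhat hρhat
  have hlθ : Real.log (θhat / θhat) = 0 := by
    rw [div_self hθhat.ne']; exact Real.log_one
  have hlρ : Real.log (ρhat / ρhat) = 0 := by
    rw [div_self hρhat.ne']; exact Real.log_one
  rw [he, he, hψ, hψ, hηθ, hηh, hphat, hlθ, hlρ]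
  field_simp
  ring
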